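/- Let C ⊆ ℝⁿ be a polyhedral cone. Then ℝⁿ = ⋃_F (F − F^◇), the union over all faces F of C, where F^◇ = {c ∈ C^∨ : ⟨c,x⟩ = 0 for all x ∈ F} is the conjugate face in the polar cone C^∨ = {y : ⟨y,x⟩ ≥ 0 ∀x ∈ C}. Specifically, for every p ∈ ℝⁿ, if r is the nearest point of C to p and F is the face of C containing r in its relative interior, then p ∈ F − F^◇. -/
import Mathlib


open Set MeasureTheory Pointwise
open scoped RealInnerProductSpace

/-- The polar (dual) cone `C^∨ = {y : ⟪x, y⟫ ≥ 0 for all x ∈ C}`. -/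
def dualCone {n : ℕ} (C : Set (EuclideanSpace ℝ (Fin n))) :
    Set (EuclideanSpace ℝ (Fin n)) :=
  {y | ∀ x ∈ C, 0 ≤ ⟪x, y⟫}

/-- A polyhedral cone: a finite intersection of linear halfspaces. -/
def IsPolyhedralCone {n : ℕ} (C : Set (EuclideanSpace ℝ (Fin n))) : Prop :=
  ∃ s : Finset (EuclideanSpace ℝ (Fin n)), C = {x | ∀ w ∈ s, 0 ≤ ⟪w, x⟫}

/-- A face of the cone `C`: the intersection of `C` with a supporting hyperplane
through the origin (including `C` itself, via `u = 0`). -/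
def IsFaceOfCone {n : ℕ} (C F : Set (EuclideanSpace ℝ (Fin n))) : Prop :=
  ∃ u ∈ dualCone C, F = C ∩ {x | ⟪u, x⟫ = 0}

/-- The conjugate face `F^◇ = {c ∈ C^∨ : ⟪c, x⟫ = 0 for all x ∈ F}`. -/
def conjFace {n : ℕ} (C F : Set (EuclideanSpace ℝ (Fin n))) :
    Set (EuclideanSpace ℝ (Fin n)) :=
  {c ∈ dualCone C | ∀ x ∈ F, ⟪c, x⟫ = 0}

/-- For a polyhedral cone `C`, `ℝⁿ = ⋃_F (F - F^◇)`, the union over all faces `F`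
of `C`, where `F^◇` is the conjugate face in the polar cone. -/
theorem cone_face_decomposition {n : ℕ}
    {C : Set (EuclideanSpace ℝ (Fin n))}
    (hpoly : IsPolyhedralCone C) :
    (⋃ F ∈ {F | IsFaceOfCone C F}, (F - conjFace C F)) = univ := by
  obtain ⟨s, hC⟩ := hpoly
  -- basic properties of C
  have hconv : Convex ℝ C := by
    rw [hC]
    have : {x : EuclideanSpace ℝ (Fin n) | ∀ w ∈ s, 0 ≤ ⟪w, x⟫} =
        ⋂ w ∈ s, {x | 0 ≤ ⟪w, x⟫} := by
      ext x; simp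
    rw [this]
    exact convex_iInter fun w => convex_iInter fun _ =>
      convex_halfSpace_ge (LinearMap.isLinear (innerSL ℝ w).toLinearMap) 0
  have hclosed : IsClosed C := by
    rw [hC]
    have : {x : EuclideanSpace ℝ (Fin n) | ∀ w ∈ s, 0 ≤ ⟪w, x⟫} =
        ⋂ w ∈ s, {x | 0 ≤ ⟪w, x⟫} := by
      ext x; simp
    rw [this]
    exact isClosed_biInter fun w _ =>
      isClosed_le continuous_const (innerSL ℝ w).continuous
  have hzero : (0 : EuclideanSpace ℝ (Fin n)) ∈ C := by
    rw [hC]; intro w _; simp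
  have hsmul : ∀ (c : ℝ), 0 ≤ c → ∀ x ∈ C, c • x ∈ C := by
    intro c hc x hx
    rw [hC] at hx ⊢
    intro w hw
    rw [real_inner_smul_right]
    exact mul_nonneg hc (hx w hw)
  rw [eq_univ_iff_forall]
  intro p
  -- project p onto C
  obtain ⟨r, hrC, hr⟩ := exists_norm_eq_iInf_of_complete_convex
    ⟨0, hzero⟩ (hclosed.isComplete) hconv p
  have hvar : ∀ w ∈ C, ⟪p - r, w - r⟫ ≤ 0 :=
    (norm_eq_iInf_iff_real_inner_le_zero hconv hrC).mp hr
  set u := r - p with hu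
  -- ⟪u, r⟫ = 0
  have h2r : (2 : ℝ) • r ∈ C := hsmul 2 (by norm_num) r hrC
  have h1 : ⟪p - r, r⟫ ≤ 0 := by
    have := hvar ((2 : ℝ) • r) h2r
    have e : (2 : ℝ) • r - r = r := by
      rw [two_smul]; abel
    rwa [e] at this
  have h2 : ⟪p - r, -r⟫ ≤ 0 := by
    have := hvar 0 hzero
    rwa [zero_sub] at this
  have hur : ⟪u, r⟫ = 0 := by
    have : ⟪p - r, r⟫ = 0 := le_antisymm h1 (by
      have := h2; rw [inner_neg_right] at this; linarith)
    rw [hu, ← neg_sub p r, inner_neg_left, this, neg_zero]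
  -- u ∈ dualCone C
  have hudual : u ∈ dualCone C := by
    intro x hx
    have h3 := hvar x hx
    have : ⟪p - r, x⟫ ≤ 0 := by
      have e : ⟪p - r, x - r⟫ = ⟪p - r, x⟫ - ⟪p - r, r⟫ := by
        rw [inner_sub_right]
      have hpr : ⟪p - r, r⟫ = 0 := by
        have := hur; rw [hu, ← neg_sub p r, inner_neg_left] at this; linarith
      rw [e, hpr, sub_zero] at h3
      exact h3
    rw [real_inner_comm]
    rw [hu, ← neg_sub p r, inner_neg_left]
    linarith
  set F := C ∩ {x | ⟪u, x⟫ = 0} with hF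
  have hface : IsFaceOfCone C F := ⟨u, hudual, rfl⟩
  have hrF : r ∈ F := ⟨hrC, hur⟩
  have huconj : u ∈ conjFace C F := ⟨hudual, fun x hx => hx.2⟩
  refine mem_biUnion hface ?_
  exact ⟨r, hrF, u, huconj, by simp [hu]⟩
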